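/- Let β : ℝ → ℝ be monotone increasing and Lipschitz on bounded sets (for each M > 0 there is L_M with |β(y₁) - β(y₂)| ≤ L_M|y₁ - y₂| for y₁, y₂ ∈ [-M, M]), and directionally differentiable at every point. Let A ⊂ ℝ² be measurable with finite measure, ρ ∈ [1, ∞), and y, δy ∈ L^∞(A). Then ‖(β(y + τδy) - β(y))/τ - β'(y; δy)‖_{L^ρ(A)} → 0 as τ ↘ 0, where β'(y; δy)(x) := β'(y(x); δy(x)) is the pointwise directional derivative. -/

import Mathlib

open Set Metric MeasureTheory Filter ENNReal

noncomputable section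

/-- Directional differentiability of the Nemytskii operator
`β : L^∞(A) → L^ρ(A)` for a monotone, locally Lipschitz, directionally
differentiable `β : ℝ → ℝ`. -/
theorem nemytskii_directionally_differentiable
    (β : ℝ → ℝ) (hmono : Monotone β)
    (hlip : ∀ M > (0 : ℝ), ∃ L > (0 : ℝ), ∀ y1 ∈ Icc (-M) M, ∀ y2 ∈ Icc (-M) M,
      |β y1 - β y2| ≤ L * |y1 - y2|)
    (β' : ℝ → ℝ → ℝ)
    (hdir : ∀ y dy : ℝ,
      Tendsto (fun τ : ℝ => (β (y + τ * dy) - β y) / τ)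
        (nhdsWithin 0 (Ioi 0)) (nhds (β' y dy)))
    (A : Set (EuclideanSpace ℝ (Fin 2)))
    (hA : MeasurableSet A) (hAfin : volume A < ⊤)
    (ρ : ℝ) (hρ : 1 ≤ ρ)
    (y dy : EuclideanSpace ℝ (Fin 2) → ℝ)
    (hym : Measurable y) (hdym : Measurable dy)
    (My : ℝ) (hyb : ∀ x ∈ A, |y x| ≤ My)
    (Mdy : ℝ) (hdyb : ∀ x ∈ A, |dy x| ≤ Mdy) :
    Tendsto (fun τ : ℝ =>
        eLpNorm (fun x => (β (y x + τ * dy x) - β (y x)) / τ - β' (y x) (dy x))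
          (ENNReal.ofReal ρ) (volume.restrict A))
      (nhdsWithin 0 (Ioi 0)) (nhds 0) := by
  have hρ0 : (0:ℝ) < ρ := lt_of_lt_of_le one_pos hρ
  set l : Filter ℝ := nhdsWithin 0 (Ioi 0) with hl
  set M : ℝ := |My| + |Mdy| + 1 with hM
  have hMpos : (0:ℝ) < M := by positivity
  obtain ⟨L, hL, hLip⟩ := hlip M hMpos
  have hβmeas : Measurable β := hmono.measurable
  -- abbreviation
  set g : ℝ → EuclideanSpace ℝ (Fin 2) → ℝ :=
    fun τ x => (β (y x + τ * dy x) - β (y x)) / τ - β' (y x) (dy x) with hg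
  -- measurability of the directional derivative
  have hseq : Tendsto (fun n : ℕ => 1 / ((n:ℝ) + 1)) atTop l := by
    rw [hl, tendsto_nhdsWithin_iff]
    refine ⟨tendsto_one_div_add_atTop_nhds_zero_nat, ?_⟩
    filter_upwards with n
    have : (0:ℝ) < (n:ℝ) + 1 := by positivity
    exact div_pos one_pos this
  have hβ'meas : Measurable (fun x => β' (y x) (dy x)) := by
    apply measurable_of_tendsto_metrizable
      (f := fun n x => (β (y x + (1 / ((n:ℝ)+1)) * dy x) - β (y x)) / (1 / ((n:ℝ)+1)))
    · intro n
      exact ((hβmeas.comp (hym.add (measurable_const.mul hdym))).sub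
        (hβmeas.comp hym)).div measurable_const
    · rw [tendsto_pi_nhds]
      intro x
      exact (hdir (y x) (dy x)).comp hseq
  have hgmeas : ∀ τ : ℝ, Measurable (g τ) := by
    intro τ
    exact (((hβmeas.comp (hym.add (measurable_const.mul hdym))).sub
      (hβmeas.comp hym)).div measurable_const).sub hβ'meas
  -- bounds
  have key : ∀ x ∈ A, ∀ τ ∈ Ioc (0:ℝ) 1,
      |(β (y x + τ * dy x) - β (y x)) / τ| ≤ L * M := by
    intro x hx τ hτ
    have hyx : |y x| ≤ My := hyb x hx
    have hdyx : |dy x| ≤ Mdy := hdyb x hx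
    have h1 : y x + τ * dy x ∈ Icc (-M) M := by
      have : |y x + τ * dy x| ≤ M := by
        calc |y x + τ * dy x| ≤ |y x| + |τ * dy x| := abs_add_le _ _
          _ ≤ |My| + |Mdy| := by
              have : |τ * dy x| ≤ |Mdy| := by
                rw [abs_mul, abs_of_pos hτ.1]
                calc τ * |dy x| ≤ 1 * |Mdy| := by
                      apply mul_le_mul hτ.2 (hdyx.trans (le_abs_self _)) (abs_nonneg _) zero_le_one
                  _ = |Mdy| := one_mul _
              linarith [hyx.trans (le_abs_self My)]
          _ ≤ M := by rw [hM]; linarith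
      exact abs_le.mp this
    have h2 : y x ∈ Icc (-M) M := by
      have : |y x| ≤ M := by
        calc |y x| ≤ |My| := hyx.trans (le_abs_self My)
          _ ≤ M := by rw [hM]; linarith [abs_nonneg Mdy]
      exact abs_le.mp this
    have hd := hLip _ h1 _ h2
    rw [abs_div, abs_of_pos hτ.1, div_le_iff₀ hτ.1]
    calc |β (y x + τ * dy x) - β (y x)| ≤ L * |y x + τ * dy x - y x| := hd
      _ = L * (τ * |dy x|) := by rw [add_sub_cancel_left, abs_mul, abs_of_pos hτ.1]
      _ ≤ L * M * τ := by
          rw [mul_comm (L * M) τ, ← mul_assoc, mul_comm L τ, mul_assoc]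
          apply mul_le_mul_of_nonneg_left _ hτ.1.le
          apply mul_le_mul_of_nonneg_left _ hL.le
          calc |dy x| ≤ |Mdy| := hdyx.trans (le_abs_self _)
            _ ≤ M := by rw [hM]; linarith [abs_nonneg My]
  have hIoc : Ioc (0:ℝ) 1 ∈ l := by
    rw [hl]
    exact Ioc_mem_nhdsGT_of_mem ⟨le_refl 0, one_pos⟩
  have hβ'bd : ∀ x ∈ A, |β' (y x) (dy x)| ≤ L * M := by
    intro x hx
    have habs : Tendsto (fun τ : ℝ => |(β (y x + τ * dy x) - β (y x)) / τ|) l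
        (nhds |β' (y x) (dy x)|) := (hdir (y x) (dy x)).abs
    apply le_of_tendsto habs
    filter_upwards [hIoc] with τ hτ
    exact key x hx τ hτ
  have hgbd : ∀ x ∈ A, ∀ τ ∈ Ioc (0:ℝ) 1, |g τ x| ≤ 2 * (L * M) := by
    intro x hx τ hτ
    calc |g τ x| ≤ |(β (y x + τ * dy x) - β (y x)) / τ| + |β' (y x) (dy x)| := abs_sub _ _
      _ ≤ L * M + L * M := add_le_add (key x hx τ hτ) (hβ'bd x hx)
      _ = 2 * (L * M) := by ring
  -- pointwise convergence to 0
  have hptwise : ∀ x, Tendsto (fun τ => g τ x) l (nhds 0) := by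
    intro x
    have := (hdir (y x) (dy x)).sub (tendsto_const_nhds (x := β' (y x) (dy x)))
    simpa using this
  -- rewrite eLpNorm
  have hp0 : ENNReal.ofReal ρ ≠ 0 := by
    simp [ENNReal.ofReal_eq_zero, not_le, hρ0]
  have hptop : ENNReal.ofReal ρ ≠ ⊤ := ENNReal.ofReal_ne_top
  have htoReal : (ENNReal.ofReal ρ).toReal = ρ := ENNReal.toReal_ofReal hρ0.le
  simp only [eLpNorm_eq_lintegral_rpow_enorm_toReal hp0 hptop, htoReal, enorm_eq_nnnorm]
  -- dominated convergence for lintegral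
  have hI : Tendsto (fun τ => ∫⁻ x, (‖g τ x‖₊ : ℝ≥0∞) ^ ρ ∂(volume.restrict A)) l
      (nhds 0) := by
    have h0 : (0:ℝ≥0∞) = ∫⁻ _, (0:ℝ≥0∞) ∂(volume.restrict A) := by simp
    rw [h0]
    apply tendsto_lintegral_filter_of_dominated_convergence
      (fun _ => ENNReal.ofReal ((2 * (L * M)) ^ ρ))
    · filter_upwards with τ
      exact ((hgmeas τ).nnnorm.coe_nnreal_ennreal).pow_const ρ |>.mono le_rfl le_rfl
    · filter_upwards [hIoc] with τ hτ
      rw [ae_restrict_iff' hA]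
      filter_upwards with x hx
      have hb := hgbd x hx τ hτ
      have : (‖g τ x‖₊ : ℝ≥0∞) = ENNReal.ofReal |g τ x| := by
        rw [← Real.norm_eq_abs]; exact (ofReal_norm_eq_enorm _).symm
      rw [this, ENNReal.ofReal_rpow_of_nonneg (abs_nonneg _) hρ0.le]
      exact ENNReal.ofReal_le_ofReal (Real.rpow_le_rpow (abs_nonneg _) hb hρ0.le)
    · rw [lintegral_const, Measure.restrict_apply_univ]
      exact ENNReal.mul_ne_top ENNReal.ofReal_ne_top hAfin.ne
    · filter_upwards with x
      have hc : Continuous fun t : ℝ => ((‖t‖₊ : ℝ≥0∞)) ^ ρ :=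
        ENNReal.continuous_rpow_const.comp (ENNReal.continuous_coe.comp continuous_nnnorm)
      have := (hc.tendsto 0).comp (hptwise x)
      simpa [Function.comp_def, ENNReal.zero_rpow_of_pos hρ0] using this
  have hfinal := (ENNReal.continuous_rpow_const (y := 1/ρ)).tendsto 0 |>.comp hI
  have h1ρ : (0:ℝ) < 1/ρ := by positivity
  have hz : (0:ℝ≥0∞) ^ (1/ρ) = 0 := ENNReal.zero_rpow_of_pos h1ρ
  rw [show (1:ℝ)/ρ = ρ⁻¹ by rw [one_div]] at hz
  simpa [Function.comp_def, hz] using hfinal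

end
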